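/- Let W(u) = (1/π²)(1 + cos(πu)) and define φ(x,y) = (2/π) arctan(x/(y+1)) for (x,y) ∈ ℝ²₊. Then: (i) φ is harmonic in the open half-plane, i.e., ∂ₓₓφ + ∂_{yy}φ = 0 for y > 0; (ii) φ satisfies the nonlinear boundary condition ∂_yφ(x,0) = W'(φ(x,0)) for all x ∈ ℝ (both sides equal −(2/π)·x/(1+x²)); (iii) lim_{x→+∞} φ(x,0) = 1 and lim_{x→−∞} φ(x,0) = −1; (iv) ∂ₓφ(x,0) > 0 for all x; (v) −1 < φ(x,y) < 1 for all (x,y) ∈ ℝ²₊. -/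

import Mathlib

open Real Filter Set

noncomputable section

/-- Partial derivative in the first (x) variable of `f : ℝ → ℝ → ℝ`. -/
def pdx (f : ℝ → ℝ → ℝ) (x y : ℝ) : ℝ := deriv (fun x' => f x' y) x

/-- Partial derivative in the second (y) variable. -/
def pdy (f : ℝ → ℝ → ℝ) (x y : ℝ) : ℝ := deriv (fun y' => f x y') y

/-- Second partial derivative in x. -/
def pdxx (f : ℝ → ℝ → ℝ) (x y : ℝ) : ℝ := deriv (fun x' => pdx f x' y) x

/-- Second partial derivative in y. -/
def pdyy (f : ℝ → ℝ → ℝ) (x y : ℝ) : ℝ := deriv (fun y' => pdy f x y') y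

/-- The periodic misfit potential `W(u) = (1/π²)(1 + cos(πu))`. -/
def Wpn (u : ℝ) : ℝ := (1 / π ^ 2) * (1 + Real.cos (π * u))

/-- The explicit metastable transition profile `φ(x,y) = (2/π) arctan(x/(y+1))`. -/
def φpn (x y : ℝ) : ℝ := (2 / π) * Real.arctan (x / (y + 1))

lemma hasDerivAt_phi_x (x y : ℝ) (hy : y + 1 ≠ 0) :
    HasDerivAt (fun x' => φpn x' y)
      ((2 / π) * ((y + 1) / ((y + 1) ^ 2 + x ^ 2))) x := by
  have h1 : HasDerivAt (fun x' : ℝ => x' / (y + 1)) (1 / (y + 1)) x := by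
    simpa using (hasDerivAt_id x).div_const (y + 1)
  have h3 := ((Real.hasDerivAt_arctan (x / (y + 1))).comp x h1).const_mul (2 / π)
  refine h3.congr_deriv ?_
  have hd : (y + 1) ^ 2 + x ^ 2 ≠ 0 := by positivity
  field_simp

lemma hasDerivAt_phi_y (x y : ℝ) (hy : y + 1 ≠ 0) :
    HasDerivAt (fun y' => φpn x y')
      ((2 / π) * (-x / ((y + 1) ^ 2 + x ^ 2))) y := by
  have h0 : HasDerivAt (fun y' : ℝ => y' + 1) 1 y := by
    simpa using (hasDerivAt_id y).add_const 1
  have h1 : HasDerivAt (fun y' : ℝ => x / (y' + 1)) (x * (-1 / (y + 1) ^ 2)) y := by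
    simpa [div_eq_mul_inv] using (h0.inv hy).const_mul x
  have h3 := ((Real.hasDerivAt_arctan (x / (y + 1))).comp y h1).const_mul (2 / π)
  refine h3.congr_deriv ?_
  have hd : (y + 1) ^ 2 + x ^ 2 ≠ 0 := by positivity
  field_simp

lemma deriv_Wpn (u : ℝ) : deriv Wpn u = -(1 / π) * Real.sin (π * u) := by
  have h0 : HasDerivAt (fun u' : ℝ => π * u') π u := by
    simpa using (hasDerivAt_id u).const_mul π
  have h1 := (Real.hasDerivAt_cos (π * u)).comp u h0
  have h2 : HasDerivAt Wpn ((1 / π ^ 2) * (-Real.sin (π * u) * π)) u := by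
    have := (h1.const_add 1).const_mul (1 / π ^ 2)
    show HasDerivAt (fun u' => (1 / π ^ 2) * (1 + Real.cos (π * u'))) _ u
    exact this
  rw [h2.deriv]
  have := Real.pi_ne_zero
  field_simp

lemma pdx_phi (x y : ℝ) (hy : y + 1 ≠ 0) :
    pdx φpn x y = (2 / π) * ((y + 1) / ((y + 1) ^ 2 + x ^ 2)) :=
  (hasDerivAt_phi_x x y hy).deriv

lemma pdy_phi (x y : ℝ) (hy : y + 1 ≠ 0) :
    pdy φpn x y = (2 / π) * (-x / ((y + 1) ^ 2 + x ^ 2)) :=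
  (hasDerivAt_phi_y x y hy).deriv

lemma pdxx_phi (x y : ℝ) (hy : y + 1 ≠ 0) :
    pdxx φpn x y = (2 / π) * ((y + 1) * (-(2 * x)) / (((y + 1) ^ 2 + x ^ 2) ^ 2)) := by
  have hfun : (fun x' => pdx φpn x' y) =
      fun x' => (2 / π) * ((y + 1) / ((y + 1) ^ 2 + x' ^ 2)) := by
    funext x'; exact pdx_phi x' y hy
  have hd : ∀ x' : ℝ, (y + 1) ^ 2 + x' ^ 2 ≠ 0 := fun x' => by positivity
  have h1 : HasDerivAt (fun x' : ℝ => (y + 1) ^ 2 + x' ^ 2) (2 * x) x := by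
    simpa using ((hasDerivAt_id x).pow 2).const_add ((y + 1) ^ 2)
  have h2 := ((h1.inv (hd x)).const_mul (y + 1)).const_mul (2 / π)
  simp only [Pi.inv_apply] at h2
  rw [pdxx, hfun]
  rw [(show (fun x' => (2 / π) * ((y + 1) / ((y + 1) ^ 2 + x' ^ 2))) =
      fun x' => (2 / π) * ((y + 1) * ((y + 1) ^ 2 + x' ^ 2)⁻¹) by
    funext x'; ring), h2.deriv]
  field_simp

lemma pdyy_phi (x y : ℝ) (hy : 0 < y + 1) :
    pdyy φpn x y = (2 / π) * (-x * (-(2 * (y + 1))) / (((y + 1) ^ 2 + x ^ 2) ^ 2)) := by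
  have hev : ∀ᶠ y' in nhds y, 0 < y' + 1 := by
    have : Tendsto (fun y' : ℝ => y' + 1) (nhds y) (nhds (y + 1)) := by
      exact (continuous_id.add continuous_const).continuousAt
    exact this.eventually (eventually_gt_nhds hy)
  have hd : (y + 1) ^ 2 + x ^ 2 ≠ 0 := by positivity
  have h0 : HasDerivAt (fun y' : ℝ => y' + 1) 1 y := by
    simpa using (hasDerivAt_id y).add_const 1
  have h1 : HasDerivAt (fun y' : ℝ => (y' + 1) ^ 2 + x ^ 2) (2 * (y + 1)) y := by
    simpa using (h0.pow 2).add_const (x ^ 2)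
  have h2 := ((h1.inv hd).const_mul (-x)).const_mul (2 / π)
  simp only [Pi.inv_apply] at h2
  have h3 : HasDerivAt (fun y' => pdy φpn x y')
      ((2 / π) * (-x * (-(2 * (y + 1)) / ((y + 1) ^ 2 + x ^ 2) ^ 2))) y := by
    apply h2.congr_of_eventuallyEq
    filter_upwards [hev] with y' hy'
    rw [pdy_phi x y' (ne_of_gt hy')]; ring
  rw [pdyy, h3.deriv]
  field_simp

lemma phi_bounds (x y : ℝ) : -1 < φpn x y ∧ φpn x y < 1 := by
  have hπ : 0 < 2 / π := by positivity
  have h1 := Real.arctan_lt_pi_div_two (x / (y + 1))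
  have h2 := Real.neg_pi_div_two_lt_arctan (x / (y + 1))
  constructor
  · have := (mul_lt_mul_iff_right₀ hπ).mpr h2
    calc (-1 : ℝ) = (2 / π) * (-(π / 2)) := by field_simp
    _ < φpn x y := this
  · have := (mul_lt_mul_iff_right₀ hπ).mpr h1
    calc φpn x y < (2 / π) * (π / 2) := this
    _ = 1 := by field_simp

lemma sin_two_arctan (x : ℝ) : Real.sin (2 * Real.arctan x) = 2 * x / (1 + x ^ 2) := by
  rw [Real.sin_two_mul, Real.sin_arctan, Real.cos_arctan]
  have h : (0:ℝ) < 1 + x ^ 2 := by positivity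
  have hs : Real.sqrt (1 + x ^ 2) * Real.sqrt (1 + x ^ 2) = 1 + x ^ 2 :=
    Real.mul_self_sqrt h.le
  have hs' : Real.sqrt (1 + x ^ 2) ≠ 0 := by positivity
  field_simp
  rw [Real.sq_sqrt h.le]

/-- For `W(u) = (1/π²)(1 + cos(πu))` and `φ(x,y) = (2/π) arctan(x/(y+1))`:
(i) `φ` is harmonic for `y > 0`; (ii) `∂_y φ(x,0) = W'(φ(x,0))`, both sides being
`-(2/π)·x/(1+x²)`; (iii) `φ(x,0) → ±1` as `x → ±∞`; (iv) `∂ₓφ(x,0) > 0`;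
(v) `-1 < φ < 1` on the closed upper half-plane. -/
theorem explicit_profile_is_metastable :
    (∀ x y : ℝ, 0 < y → pdxx φpn x y + pdyy φpn x y = 0) ∧
    (∀ x : ℝ, pdy φpn x 0 = deriv Wpn (φpn x 0) ∧
      deriv Wpn (φpn x 0) = -(2 / π) * (x / (1 + x ^ 2))) ∧
    (Tendsto (fun x => φpn x 0) atTop (nhds 1) ∧
      Tendsto (fun x => φpn x 0) atBot (nhds (-1))) ∧
    (∀ x : ℝ, 0 < pdx φpn x 0) ∧
    (∀ x y : ℝ, 0 ≤ y → -1 < φpn x y ∧ φpn x y < 1) := by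
  have hπ := Real.pi_pos
  refine ⟨?_, ?_, ⟨?_, ?_⟩, ?_, ?_⟩
  · intro x y hy
    have h1 : (0:ℝ) < y + 1 := by linarith
    rw [pdxx_phi x y (ne_of_gt h1), pdyy_phi x y h1]
    ring
  · intro x
    have h1 : (0:ℝ) + 1 ≠ 0 := by norm_num
    have hd : (1:ℝ) + x ^ 2 ≠ 0 := by positivity
    have hL : pdy φpn x 0 = -(2 / π) * (x / (1 + x ^ 2)) := by
      rw [pdy_phi x 0 h1]; norm_num; ring
    have hu : φpn x 0 = (2 / π) * Real.arctan x := by simp [φpn]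
    have hR : deriv Wpn (φpn x 0) = -(2 / π) * (x / (1 + x ^ 2)) := by
      rw [hu, deriv_Wpn]
      have h2 : π * ((2 / π) * Real.arctan x) = 2 * Real.arctan x := by
        field_simp
      rw [h2, sin_two_arctan]
      field_simp
    exact ⟨hL.trans hR.symm, hR⟩
  · have h2 : (2 / π) * (π / 2) = 1 := by field_simp
    have h : Tendsto (fun x => (2 / π) * Real.arctan x) atTop (nhds ((2 / π) * (π / 2))) :=
      (Real.tendsto_arctan_atTop.mono_right nhdsWithin_le_nhds).const_mul (2 / π)
    rw [h2] at h
    simpa [φpn] using h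
  · have h2 : (2 / π) * (-(π / 2)) = -1 := by field_simp
    have h : Tendsto (fun x => (2 / π) * Real.arctan x) atBot (nhds ((2 / π) * (-(π / 2)))) :=
      (Real.tendsto_arctan_atBot.mono_right nhdsWithin_le_nhds).const_mul (2 / π)
    rw [h2] at h
    simpa [φpn] using h
  · intro x
    rw [pdx_phi x 0 (by norm_num)]
    positivity
  · intro x y _
    exact phi_bounds x y

end
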